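/- Let H be a complex Hilbert space and let (P n)_{n∈ℕ} be a family of continuous linear maps on H such that each P n is a self-adjoint idempotent (orthogonal projection), P m ∘ P n = 0 whenever m ≠ n, and for every x ∈ H the series ∑_{n} P n x converges to x. Let C > 0, p > 0, and let G : H →L H be a continuous linear map with G ∘ P n = P (n+1) ∘ G ∘ P n and ‖G ∘ P n‖ ≤ C·(n+1)^{-p} for every n ∈ ℕ. Then 1 − G is invertible in the ring of continuous linear endomorphisms of H and ‖(1 − G)^{-1}‖ ≤ ∑_{k=0}^∞ C^k · (k!)^{-p}. -/

import Mathlib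

open scoped InnerProductSpace
open Filter

lemma pyth_fin {H : Type*} [NormedAddCommGroup H] [InnerProductSpace ℂ H]
    (s : Finset ℕ) (y : ℕ → H)
    (h : ∀ i ∈ s, ∀ j ∈ s, i ≠ j → ⟪y i, y j⟫_ℂ = 0) :
    ‖∑ i ∈ s, y i‖ ^ 2 = ∑ i ∈ s, ‖y i‖ ^ 2 := by
  classical
  induction s using Finset.cons_induction with
  | empty => simp
  | cons a s ha ih =>
    rw [Finset.sum_cons, Finset.sum_cons]
    have hz : ⟪y a, ∑ i ∈ s, y i⟫_ℂ = 0 := by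
      rw [inner_sum]
      exact Finset.sum_eq_zero fun i hi =>
        h a (Finset.mem_cons_self a s) i (Finset.mem_cons_of_mem hi)
          (fun e => ha (e ▸ hi))
    rw [norm_add_sq (𝕜 := ℂ), hz,
      ih fun i hi j hj => h i (Finset.mem_cons_of_mem hi) j (Finset.mem_cons_of_mem hj)]
    simp [add_comm]

lemma proj_contraction {H : Type*} [NormedAddCommGroup H] [InnerProductSpace ℂ H] [CompleteSpace H]
    (Q : H →L[ℂ] H) (hsa : IsSelfAdjoint Q) (hidem : Q ∘L Q = Q) (x : H) : ‖Q x‖ ≤ ‖x‖ := by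
  have hqq : Q (Q x) = Q x := by
    have := congrArg (fun T : H →L[ℂ] H => T x) hidem
    simpa using this
  have h1 : (‖Q x‖ : ℝ) ^ 2 = RCLike.re ⟪Q x, Q x⟫_ℂ := by
    rw [← inner_self_eq_norm_sq (𝕜 := ℂ)]
  have h2 : ⟪Q x, Q x⟫_ℂ = ⟪x, Q x⟫_ℂ := by
    simpa [hqq] using hsa.isSymmetric x (Q x)
  have h3 : (‖Q x‖ : ℝ) ^ 2 ≤ ‖x‖ * ‖Q x‖ := by
    rw [h1, h2]
    calc RCLike.re ⟪x, Q x⟫_ℂ ≤ ‖⟪x, Q x⟫_ℂ‖ := RCLike.re_le_norm _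
      _ ≤ ‖x‖ * ‖Q x‖ := norm_inner_le_norm _ _
  rcases eq_or_lt_of_le (norm_nonneg (Q x)) with h | h
  · rw [← h]; exact norm_nonneg x
  · nlinarith

theorem stmt_3 {H : Type*} [NormedAddCommGroup H] [InnerProductSpace ℂ H] [CompleteSpace H]
    (P : ℕ → H →L[ℂ] H)
    (hsa : ∀ n, IsSelfAdjoint (P n))
    (hidem : ∀ n, P n ∘L P n = P n)
    (horth : ∀ m n, m ≠ n → P m ∘L P n = 0)
    (hsum : ∀ x : H, HasSum (fun n => P n x) x)
    (C p : ℝ) (hC : 0 < C) (hp : 0 < p)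
    (G : H →L[ℂ] H)
    (hGP : ∀ n, G ∘L P n = P (n + 1) ∘L (G ∘L P n))
    (hGnorm : ∀ n, ‖G ∘L P n‖ ≤ C * ((n : ℝ) + 1) ^ (-p)) :
    IsUnit (1 - G) ∧
      ‖Ring.inverse (1 - G)‖ ≤ ∑' k : ℕ, C ^ k * (k.factorial : ℝ) ^ (-p) := by
  classical
  set B : ℕ → ℝ := fun k => C ^ k * (k.factorial : ℝ) ^ (-p) with hB
  have hBpos : ∀ k, 0 < B k := fun k =>
    mul_pos (pow_pos hC k) (Real.rpow_pos_of_pos (by exact_mod_cast k.factorial_pos) _)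
  have hBrec : ∀ k, B (k + 1) = (C * ((k : ℝ) + 1) ^ (-p)) * B k := by
    intro k
    have hfac : ((k + 1).factorial : ℝ) = ((k : ℝ) + 1) * (k.factorial : ℝ) := by
      push_cast [Nat.factorial_succ]; ring
    have : (((k + 1).factorial : ℝ)) ^ (-p)
        = ((k : ℝ) + 1) ^ (-p) * (k.factorial : ℝ) ^ (-p) := by
      rw [hfac, Real.mul_rpow (by positivity) (by positivity)]
    simp only [hB, this, pow_succ]
    ring
  -- pointwise orthogonality of different P ranges
  have horthx : ∀ m n, m ≠ n → ∀ x y : H, ⟪P m x, P n y⟫_ℂ = 0 := by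
    intro m n hmn x y
    have h1 : ⟪P m x, P n y⟫_ℂ = ⟪x, P m (P n y)⟫_ℂ := by
      simpa using (hsa m).isSymmetric x (P n y)
    have h2 : P m (P n y) = 0 := by
      have := congrArg (fun T : H →L[ℂ] H => T y) (horth m n hmn)
      simpa using this
    rw [h1, h2, inner_zero_right]
  -- grading raising for powers
  have hGkP : ∀ k n, (G ^ k) ∘L P n = P (n + k) ∘L ((G ^ k) ∘L P n) := by
    intro k
    induction k with
    | zero => intro n; simpa [pow_zero, ContinuousLinearMap.one_def] using (hidem n).symm
    | succ k ih =>
      intro n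
      have h1 : (G ^ (k + 1)) ∘L P n = G ∘L ((G ^ k) ∘L P n) := by
        rw [pow_succ']
        rfl
      calc (G ^ (k + 1)) ∘L P n = G ∘L (P (n + k) ∘L ((G ^ k) ∘L P n)) := by rw [h1, ← ih n]
        _ = (G ∘L P (n + k)) ∘L ((G ^ k) ∘L P n) := by rw [ContinuousLinearMap.comp_assoc]
        _ = (P (n + k + 1) ∘L (G ∘L P (n + k))) ∘L ((G ^ k) ∘L P n) := by rw [← hGP (n + k)]
        _ = P (n + k + 1) ∘L ((G ∘L P (n + k)) ∘L ((G ^ k) ∘L P n)) := by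
            rw [ContinuousLinearMap.comp_assoc]
        _ = P (n + (k + 1)) ∘L ((G ^ (k + 1)) ∘L P n) := by
            rw [ContinuousLinearMap.comp_assoc, ← ih n, ← h1, ← add_assoc]
  -- norm bound for powers composed with projections
  have hGkPnorm : ∀ k n, ‖(G ^ k) ∘L P n‖ ≤ B k := by
    intro k
    induction k with
    | zero =>
      intro n
      have : ‖P n‖ ≤ 1 := by
        refine ContinuousLinearMap.opNorm_le_bound _ zero_le_one fun x => ?_
        rw [one_mul]
        exact proj_contraction (P n) (hsa n) (hidem n) x
      simpa [hB, pow_zero, ContinuousLinearMap.one_def] using this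
    | succ k ih =>
      intro n
      have h1 : (G ^ (k + 1)) ∘L P n = (G ∘L P (n + k)) ∘L ((G ^ k) ∘L P n) := by
        calc (G ^ (k + 1)) ∘L P n = G ∘L ((G ^ k) ∘L P n) := by rw [pow_succ']; rfl
          _ = G ∘L (P (n + k) ∘L ((G ^ k) ∘L P n)) := by rw [← hGkP k n]
          _ = (G ∘L P (n + k)) ∘L ((G ^ k) ∘L P n) :=
              (ContinuousLinearMap.comp_assoc _ _ _).symm
      rw [h1]
      calc ‖(G ∘L P (n + k)) ∘L ((G ^ k) ∘L P n)‖
          ≤ ‖G ∘L P (n + k)‖ * ‖(G ^ k) ∘L P n‖ := ContinuousLinearMap.opNorm_comp_le _ _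
        _ ≤ (C * ((n : ℝ) + k + 1) ^ (-p)) * B k := by
            refine mul_le_mul ?_ (ih n) (norm_nonneg _) (by positivity)
            have := hGnorm (n + k)
            push_cast at this ⊢
            linarith
        _ ≤ (C * ((k : ℝ) + 1) ^ (-p)) * B k := by
            refine mul_le_mul_of_nonneg_right (mul_le_mul_of_nonneg_left ?_ hC.le) (hBpos k).le
            exact Real.rpow_le_rpow_of_nonpos (by positivity) (by linarith)
              (by linarith)
        _ = B (k + 1) := (hBrec k).symm
  -- Bessel-type inequality
  have hbessel : ∀ (s : Finset ℕ) (x : H), ∑ n ∈ s, ‖P n x‖ ^ 2 ≤ ‖x‖ ^ 2 := by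
    intro s x
    set Q : H →L[ℂ] H := ∑ n ∈ s, P n with hQ
    have happ : ∀ m n (y : H), (P m) ((P n) y) = if m = n then (P n) y else 0 := by
      intro m n y
      by_cases hmn : m = n
      · subst hmn
        have := congrArg (fun T : H →L[ℂ] H => T y) (hidem m)
        simpa using this
      · have := congrArg (fun T : H →L[ℂ] H => T y) (horth m n hmn)
        simpa [hmn] using this
    have hQsa : IsSelfAdjoint Q := by
      rw [hQ, IsSelfAdjoint, star_sum]
      exact Finset.sum_congr rfl fun n _ => (hsa n).star_eq
    have hQidem : Q ∘L Q = Q := by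
      rw [hQ]
      ext y
      simp only [ContinuousLinearMap.coe_comp', Function.comp_apply,
        ContinuousLinearMap.coe_sum', Finset.sum_apply, map_sum]
      rw [Finset.sum_comm]
      refine Finset.sum_congr rfl fun n hn => ?_
      rw [Finset.sum_eq_single_of_mem n hn]
      · simp [happ]
      · intro m hm hmn
        simp [happ, hmn]
    have hQx : Q x = ∑ n ∈ s, P n x := by simp [hQ]
    have h1 : ∑ n ∈ s, ‖P n x‖ ^ 2 = ‖Q x‖ ^ 2 := by
      rw [hQx, pyth_fin s (fun n => P n x) fun i _ j _ hij => horthx i j hij x x]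
    rw [h1]
    have := proj_contraction Q hQsa hQidem x
    nlinarith [norm_nonneg (Q x), norm_nonneg x]
  -- operator norm bound for powers
  have hGk : ∀ k, ‖G ^ k‖ ≤ B k := by
    intro k
    refine ContinuousLinearMap.opNorm_le_bound _ (hBpos k).le fun x => ?_
    have h2 : HasSum (fun n => (G ^ k) (P n x)) ((G ^ k) x) :=
      (ContinuousLinearMap.hasSum (G ^ k) (hsum x))
    have hb : ∀ s : Finset ℕ, ‖∑ n ∈ s, (G ^ k) (P n x)‖ ≤ B k * ‖x‖ := by
      intro s
      have horthk : ∀ i ∈ s, ∀ j ∈ s, i ≠ j → ⟪(G ^ k) (P i x), (G ^ k) (P j x)⟫_ℂ = 0 := by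
        intro i _ j _ hij
        have hi : (G ^ k) (P i x) = P (i + k) ((G ^ k) (P i x)) := by
          have := congrArg (fun T : H →L[ℂ] H => T x) (hGkP k i)
          simpa using this
        have hj : (G ^ k) (P j x) = P (j + k) ((G ^ k) (P j x)) := by
          have := congrArg (fun T : H →L[ℂ] H => T x) (hGkP k j)
          simpa using this
        rw [hi, hj]
        exact horthx (i + k) (j + k) (by omega) _ _
      have hsq : ‖∑ n ∈ s, (G ^ k) (P n x)‖ ^ 2 ≤ (B k * ‖x‖) ^ 2 := by
        rw [pyth_fin s _ horthk]
        calc ∑ n ∈ s, ‖(G ^ k) (P n x)‖ ^ 2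
            ≤ ∑ n ∈ s, (B k) ^ 2 * ‖P n x‖ ^ 2 := by
              refine Finset.sum_le_sum fun n _ => ?_
              have h3 : ‖(G ^ k) (P n x)‖ ≤ B k * ‖P n x‖ := by
                have hPn : P n (P n x) = P n x := by
                  have := congrArg (fun T : H →L[ℂ] H => T x) (hidem n)
                  simpa using this
                have h4 : (G ^ k) (P n x) = ((G ^ k) ∘L P n) (P n x) := by
                  simp [hPn]
                rw [h4]
                exact (ContinuousLinearMap.le_opNorm _ _).trans
                  (mul_le_mul_of_nonneg_right (hGkPnorm k n) (norm_nonneg _))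
              nlinarith [norm_nonneg ((G ^ k) (P n x)), norm_nonneg (P n x),
                mul_nonneg (hBpos k).le (norm_nonneg (P n x))]
          _ = (B k) ^ 2 * ∑ n ∈ s, ‖P n x‖ ^ 2 := by rw [Finset.mul_sum]
          _ ≤ (B k) ^ 2 * ‖x‖ ^ 2 := by
              exact mul_le_mul_of_nonneg_left (hbessel s x) (by positivity)
          _ = (B k * ‖x‖) ^ 2 := by ring
      nlinarith [norm_nonneg (∑ n ∈ s, (G ^ k) (P n x)),
        mul_nonneg (hBpos k).le (norm_nonneg x)]
    exact le_of_tendsto' (Filter.Tendsto.norm h2) hb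
  -- summability of the bound sequence via the ratio test
  have hBsummable : Summable B := by
    refine summable_of_ratio_test_tendsto_lt_one (l := 0) one_pos
      (Filter.Eventually.of_forall fun k => (hBpos k).ne') ?_
    have hnat : Tendsto (fun k : ℕ => (k : ℝ) + 1) atTop atTop :=
      Filter.tendsto_atTop_add_const_right atTop 1 tendsto_natCast_atTop_atTop
    have h0 : Tendsto (fun k : ℕ => C * ((k : ℝ) + 1) ^ (-p)) atTop (nhds 0) := by
      have := ((tendsto_rpow_neg_atTop hp).comp hnat).const_mul C
      simpa using this
    have heq : ∀ k : ℕ, ‖B (k + 1)‖ / ‖B k‖ = C * ((k : ℝ) + 1) ^ (-p) := by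
      intro k
      rw [Real.norm_eq_abs, Real.norm_eq_abs, abs_of_pos (hBpos _), abs_of_pos (hBpos _),
        hBrec k, mul_div_assoc, div_self (hBpos k).ne', mul_one]
    simpa only [heq] using h0
  have hGksummable : Summable fun k => ‖(G ^ k : H →L[ℂ] H)‖ :=
    Summable.of_nonneg_of_le (fun k => norm_nonneg _) hGk hBsummable
  have hGsum : Summable fun k => (G ^ k : H →L[ℂ] H) := Summable.of_norm hGksummable
  set S : H →L[ℂ] H := ∑' k, (G ^ k : H →L[ℂ] H) with hSdef
  have hS : HasSum (fun k => (G ^ k : H →L[ℂ] H)) S := hGsum.hasSum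
  have hshift : HasSum (fun k => (G ^ (k + 1) : H →L[ℂ] H)) (S - 1) := by
    have := (hasSum_nat_add_iff' (f := fun k => (G ^ k : H →L[ℂ] H)) 1).mpr hS
    simpa using this
  have hleft : (1 - G) * S = 1 := by
    have h1 : HasSum (fun k => G * G ^ k) (G * S) := hS.mul_left G
    have h2 : (fun k => G * G ^ k) = fun k => G ^ (k + 1) :=
      funext fun k => (pow_succ' G k).symm
    rw [h2] at h1
    have hGS : G * S = S - 1 := h1.unique hshift
    rw [sub_mul, one_mul, hGS, sub_sub_cancel]
  have hright : S * (1 - G) = 1 := by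
    have h1 : HasSum (fun k => G ^ k * G) (S * G) := hS.mul_right G
    have h2 : (fun k => G ^ k * G) = fun k => G ^ (k + 1) :=
      funext fun k => (pow_succ G k).symm
    rw [h2] at h1
    have hSG : S * G = S - 1 := h1.unique hshift
    rw [mul_sub, mul_one, hSG, sub_sub_cancel]
  let u : (H →L[ℂ] H)ˣ := ⟨1 - G, S, hleft, hright⟩
  refine ⟨⟨u, rfl⟩, ?_⟩
  have hinv : Ring.inverse (1 - G) = S := by
    have : Ring.inverse ((u : H →L[ℂ] H)) = ((u⁻¹ : (H →L[ℂ] H)ˣ) : H →L[ℂ] H) :=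
      Ring.inverse_unit u
    simpa [u] using this
  rw [hinv]
  calc ‖S‖ ≤ ∑' k, ‖(G ^ k : H →L[ℂ] H)‖ := norm_tsum_le_tsum_norm hGksummable
    _ ≤ ∑' k, B k := hGksummable.tsum_le_tsum hGk hBsummable
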